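/- Let m ≥ 0 be an integer and let P(T) = T^m · P̃(T) where P̃ ∈ ℂ[T]. Then for every ξ ∈ ℂ with ξ ≠ 0 and every integer j ≥ 0, P̃^{[j]}(ξ) = Σ_{h=0}^j (−1)^h C(m+h−1, h) ξ^{−m−h} P^{[j−h]}(ξ), where C(m+h−1,h) denotes a binomial coefficient (with the convention C(−1,0)=1 when m=h=0). -/

import Mathlib

open Finset Polynomial PowerSeries


lemma coeff_one_sub_pow (M k : ℕ) :
    (PowerSeries.coeff (R := ℂ) k) ((1 - PowerSeries.X) ^ M) = (-1 : ℂ) ^ k * (M.choose k : ℂ) := by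
  rw [sub_pow, map_sum]
  have hterm : ∀ i, ((-1 : ℂ⟦X⟧) ^ (i + M) * 1 ^ i * PowerSeries.X ^ (M - i) * (M.choose i : ℂ⟦X⟧))
      = PowerSeries.C (R := ℂ) ((-1 : ℂ) ^ (i + M) * (M.choose i : ℂ)) * PowerSeries.X ^ (M - i) := by
    intro i
    have : ((-1 : ℂ⟦X⟧)) = PowerSeries.C (R := ℂ) (-1 : ℂ) := by simp
    rw [this, ← map_pow]
    have : ((M.choose i : ℂ⟦X⟧)) = PowerSeries.C (R := ℂ) (M.choose i : ℂ) := by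
      simp
    rw [this, one_pow, mul_one, map_mul]
    ring
  simp only [hterm, PowerSeries.coeff_C_mul, PowerSeries.coeff_X_pow]
  by_cases hk : k ≤ M
  · rw [Finset.sum_eq_single (M - k)]
    · have : M - (M - k) = k := by omega
      rw [this, if_pos rfl, mul_one]
      have e : (-1 : ℂ) ^ (M - k + M) = (-1 : ℂ) ^ k := by
        rw [show M - k + M = k + 2 * (M - k) by omega, pow_add, pow_mul]
        norm_num
      rw [e, Nat.choose_symm hk]
    · intro i hi hik
      rw [if_neg (by rw [Finset.mem_range] at hi; omega), mul_zero]
    · intro h; exact absurd (Finset.mem_range.2 (by omega)) h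
  · rw [Finset.sum_eq_zero, eq_comm, mul_eq_zero]
    · right; exact_mod_cast Nat.choose_eq_zero_of_lt (by omega)
    · intro i hi
      rw [Finset.mem_range] at hi
      rw [if_neg (by omega), mul_zero]

lemma key (m n : ℕ) :
    ∑ h ∈ Finset.range (n + 1),
      (-1 : ℂ) ^ h * ((m + h - 1).choose h : ℂ) * (m.choose (n - h) : ℂ) =
      if n = 0 then 1 else 0 := by
  cases m with
  | zero =>
    rw [Finset.sum_eq_single 0]
    · cases n <;> simp
    · intro h _ hh
      have : h - 1 < h := by omega
      simp [Nat.choose_eq_zero_of_lt this]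
    · simp
  | succ d =>
    have h1 := congrArg (PowerSeries.coeff (R := ℂ) n)
      (PowerSeries.mk_add_choose_mul_one_sub_pow_eq_one ℂ d)
    rw [PowerSeries.coeff_mul, PowerSeries.coeff_one] at h1
    rw [Finset.Nat.sum_antidiagonal_eq_sum_range_succ_mk] at h1
    simp only [PowerSeries.coeff_mk, coeff_one_sub_pow] at h1
    have h2 : ∑ h ∈ Finset.range (n + 1),
        (-1 : ℂ) ^ h * (((d + 1) + h - 1).choose h : ℂ) * ((d + 1).choose (n - h) : ℂ)
        = (-1 : ℂ) ^ n * (if n = 0 then 1 else 0) := by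
      rw [← h1, Finset.mul_sum]
      refine Finset.sum_congr rfl fun h hh => ?_
      rw [Finset.mem_range] at hh
      have hhn : h ≤ n := by omega
      have e1 : (d + 1) + h - 1 = d + h := by omega
      have e2 : (d + h).choose h = (d + h).choose d := by
        have := Nat.choose_symm (show h ≤ d + h from Nat.le_add_left h d)
        rw [Nat.add_sub_cancel] at this
        exact this.symm
      have h4 : (-1 : ℂ) ^ h * (-1 : ℂ) ^ h = 1 := by
        rw [← pow_add, ← two_mul, pow_mul]; norm_num
      have h5 : (-1 : ℂ) ^ (n - h) * (-1 : ℂ) ^ h = (-1 : ℂ) ^ n := by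
        rw [← pow_add, Nat.sub_add_cancel hhn]
      have e3 : (-1 : ℂ) ^ (n - h) = (-1 : ℂ) ^ n * (-1 : ℂ) ^ h := by
        calc (-1 : ℂ) ^ (n - h) = (-1 : ℂ) ^ (n - h) * ((-1 : ℂ) ^ h * (-1 : ℂ) ^ h) := by
              rw [h4, mul_one]
          _ = ((-1 : ℂ) ^ (n - h) * (-1 : ℂ) ^ h) * (-1 : ℂ) ^ h := by ring
          _ = (-1 : ℂ) ^ n * (-1 : ℂ) ^ h := by rw [h5]
      rw [e1, e2, e3]
      have hsq : (-1 : ℂ) ^ (n * 2) = 1 := by rw [mul_comm, pow_mul]; norm_num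
      ring_nf
      rw [hsq, mul_one]
    rw [h2]
    by_cases hn : n = 0 <;> simp [hn]


theorem stmt_18 (m : ℕ) (Pt : Polynomial ℂ) (ξ : ℂ) (hξ : ξ ≠ 0) (j : ℕ) :
    (Polynomial.hasseDeriv j Pt).eval ξ =
      ∑ h ∈ Finset.range (j + 1),
        (-1 : ℂ) ^ h * (Nat.choose (m + h - 1) h : ℂ) * ξ ^ (-(m : ℤ) - h) *
          (Polynomial.hasseDeriv (j - h) (Polynomial.X ^ m * Pt)).eval ξ := by
  set F : ℕ → ℕ → ℂ := fun h a =>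
    (-1 : ℂ) ^ h * (((m + h - 1).choose h : ℂ)) * ((m.choose a : ℂ)) *
      ξ ^ (-((h : ℤ) + (a : ℤ))) * (Polynomial.hasseDeriv (j - h - a) Pt).eval ξ with hF
  have expand : ∀ h ∈ Finset.range (j + 1),
      (-1 : ℂ) ^ h * ((m + h - 1).choose h : ℂ) * ξ ^ (-(m : ℤ) - h) *
        (Polynomial.hasseDeriv (j - h) (Polynomial.X ^ m * Pt)).eval ξ
      = ∑ a ∈ Finset.range ((j + 1) - h), F h a := by
    intro h hh
    rw [Finset.mem_range] at hh
    have hhj : h ≤ j := by omega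
    rw [hasseDeriv_mul, eval_finset_sum, Finset.Nat.sum_antidiagonal_eq_sum_range_succ_mk]
    rw [Nat.succ_eq_add_one, show j - h + 1 = (j + 1) - h by omega, Finset.mul_sum]
    refine Finset.sum_congr rfl fun a ha => ?_
    rw [Finset.mem_range] at ha
    have haj : a ≤ j - h := by omega
    rw [X_pow_eq_monomial, hasseDeriv_monomial, eval_mul, eval_monomial, hF]
    by_cases ham : a ≤ m
    · have e1 : (ξ : ℂ) ^ ((m - a : ℕ)) = ξ ^ ((m : ℤ) - (a : ℤ)) := by
        rw [show ((m : ℤ) - (a : ℤ)) = ((m - a : ℕ) : ℤ) by omega, zpow_natCast]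
      have e2 : ξ ^ (-(m : ℤ) - (h : ℤ)) * ξ ^ ((m : ℤ) - (a : ℤ)) =
          ξ ^ (-((h : ℤ) + (a : ℤ))) := by
        rw [← zpow_add₀ hξ]; congr 1; ring
      rw [e1]
      calc (-1 : ℂ) ^ h * ((m + h - 1).choose h : ℂ) * ξ ^ (-(m : ℤ) - (h : ℤ)) *
            ((m.choose a : ℂ) * 1 * ξ ^ ((m : ℤ) - (a : ℤ)) *
              (Polynomial.hasseDeriv (j - h - a) Pt).eval ξ)
          = (-1 : ℂ) ^ h * ((m + h - 1).choose h : ℂ) * ((m.choose a : ℂ)) *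
            (ξ ^ (-(m : ℤ) - (h : ℤ)) * ξ ^ ((m : ℤ) - (a : ℤ))) *
            (Polynomial.hasseDeriv (j - h - a) Pt).eval ξ := by ring
        _ = _ := by rw [e2]
    · have hz : m.choose a = 0 := Nat.choose_eq_zero_of_lt (by omega : m < a)
      rw [hz]
      simp [hz]
  rw [Finset.sum_congr rfl expand, ← Finset.sum_range_diag_flip (j + 1) F]
  have inner : ∀ k ∈ Finset.range (j + 1),
      ∑ h ∈ Finset.range (k + 1), F h (k - h)
      = (if k = 0 then 1 else 0) * (ξ ^ (-(k : ℤ)) * (Polynomial.hasseDeriv (j - k) Pt).eval ξ) := by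
    intro k hk
    rw [Finset.mem_range] at hk
    rw [← key m k, Finset.sum_mul]
    refine Finset.sum_congr rfl fun h hh => ?_
    rw [Finset.mem_range] at hh
    have hhk : h ≤ k := by omega
    rw [hF]
    have e1 : ((h : ℤ) + ((k - h : ℕ) : ℤ)) = (k : ℤ) := by omega
    have e2 : j - h - (k - h) = j - k := by omega
    simp only [e1, e2]
    ring
  rw [Finset.sum_congr rfl inner, Finset.sum_eq_single 0]
  · simp
  · intro k _ hk
    rw [if_neg hk, zero_mul]
  · simp
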